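/- Let f : [a,b] → ℝ be a nondecreasing continuous concave function on a finite interval, with conventions f'₋(a) = +∞ and f'₊(b) = 0. Then for every real number u ≥ 0, exactly one of the following holds: (i) there is a unique y* ∈ [a,b] with u ∈ [f'₊(y*), f'₋(y*)], or (ii) there is a nonempty open interval on which f is differentiable with derivative identically equal to u. -/

import Mathlib

open Set Filter

/-- For a nondecreasing continuous concave `f : [a,b] → ℝ`, with the conventions
`f'₋(a) = +∞` and `f'₊(b) = 0`, for every `u ≥ 0` exactly one of the following holds:
(i) there is a unique `y* ∈ [a,b]` with `u ∈ [f'₊(y*), f'₋(y*)]`, or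
(ii) there is a nonempty open interval on which `f` is differentiable with derivative
identically `u`. -/
theorem superdifferential_dichotomy {a b : ℝ} (hab : a < b) (f : ℝ → ℝ)
    (hmono : MonotoneOn f (Set.Icc a b)) (hcont : ContinuousOn f (Set.Icc a b))
    (hconc : ConcaveOn ℝ (Set.Icc a b) f)
    (fp fm : ℝ → EReal)
    (hfp : ∀ y ∈ Set.Ico a b, ∃ r : ℝ, fp y = (r : EReal) ∧
      Tendsto (fun h : ℝ => (f (y + h) - f y) / h) (nhdsWithin 0 (Set.Ioi 0)) (nhds r))
    (hfpb : fp b = (0 : EReal))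
    (hfm : ∀ y ∈ Set.Ioc a b, ∃ r : ℝ, fm y = (r : EReal) ∧
      Tendsto (fun h : ℝ => (f y - f (y - h)) / h) (nhdsWithin 0 (Set.Ioi 0)) (nhds r))
    (hfma : fm a = ⊤)
    (u : ℝ) (hu : 0 ≤ u) :
    Xor' (∃! y : ℝ, y ∈ Set.Icc a b ∧ fp y ≤ (u : EReal) ∧ (u : EReal) ≤ fm y)
      (∃ c d : ℝ, c < d ∧ Set.Ioo c d ⊆ Set.Icc a b ∧
        ∀ y ∈ Set.Ioo c d, fp y = (u : EReal) ∧ fm y = (u : EReal)) := by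
  set g : ℝ → ℝ := fun y => f y - u * y with hgdef
  have hgcont : ContinuousOn g (Set.Icc a b) :=
    hcont.sub ((continuous_const.mul continuous_id).continuousOn)
  -- maxima of g are in the superdifferential set
  have memS : ∀ y ∈ Set.Icc a b, IsMaxOn g (Set.Icc a b) y →
      fp y ≤ (u : EReal) ∧ (u : EReal) ≤ fm y := by
    intro y hy hmax
    constructor
    · rcases eq_or_lt_of_le hy.2 with rfl | hyb
      · rw [hfpb]; exact_mod_cast hu
      · obtain ⟨r, hr, hlim⟩ := hfp y ⟨hy.1, hyb⟩
        rw [hr]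
        have hru : r ≤ u := by
          refine le_of_tendsto hlim ?_
          filter_upwards [Ioo_mem_nhdsGT_of_mem
            (Set.left_mem_Ico.2 (by linarith : (0:ℝ) < b - y))] with h hh
          have hmem : y + h ∈ Set.Icc a b := ⟨by linarith [hy.1, hh.1.le], by linarith [hh.2]⟩
          have hle : g (y + h) ≤ g y := hmax hmem
          simp only [hgdef] at hle
          rw [div_le_iff₀ hh.1]
          nlinarith [hle]
        exact_mod_cast hru
    · rcases eq_or_lt_of_le hy.1 with rfl | hay
      · rw [hfma]; exact le_top
      · obtain ⟨r, hr, hlim⟩ := hfm y ⟨hay, hy.2⟩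
        rw [hr]
        have hur : u ≤ r := by
          refine ge_of_tendsto hlim ?_
          filter_upwards [Ioo_mem_nhdsGT_of_mem
            (Set.left_mem_Ico.2 (by linarith : (0:ℝ) < y - a))] with h hh
          have hmem : y - h ∈ Set.Icc a b := ⟨by linarith [hh.2], by linarith [hy.2, hh.1.le]⟩
          have hle : g (y - h) ≤ g y := hmax hmem
          simp only [hgdef] at hle
          rw [le_div_iff₀ hh.1]
          nlinarith [hle]
        exact_mod_cast hur
  -- superdifferential points are maxima of g
  have maxS : ∀ y ∈ Set.Icc a b, fp y ≤ (u : EReal) → (u : EReal) ≤ fm y →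
      IsMaxOn g (Set.Icc a b) y := by
    intro y hy h1 h2
    intro z hz
    rcases lt_trichotomy z y with hzy | rfl | hyz
    · -- z < y : use fm
      have hyIoc : y ∈ Set.Ioc a b := ⟨lt_of_le_of_lt hz.1 hzy, hy.2⟩
      obtain ⟨r, hr, hlim⟩ := hfm y hyIoc
      rw [hr] at h2
      have hur : u ≤ r := by exact_mod_cast h2
      have hslope : r ≤ (f y - f z) / (y - z) := by
        refine le_of_tendsto hlim ?_
        filter_upwards [Ioo_mem_nhdsGT_of_mem
          (Set.left_mem_Ico.2 (by linarith : (0:ℝ) < y - z))] with h hh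
        have key := (hconc.neg).secant_mono_aux3 (x := z) (y := y - h) (z := y)
          hz hy (by linarith [hh.2]) (by linarith [hh.1])
        simp only [Pi.neg_apply] at key
        have e : y - (y - h) = h := by ring
        rw [e] at key
        rw [show -f y - -f z = -(f y - f z) by ring,
          show -f y - -f (y - h) = -(f y - f (y - h)) by ring,
          neg_div, neg_div, neg_le_neg_iff] at key
        exact key
      have hgz : f y - f z ≥ u * (y - z) := by
        have h0 : 0 < y - z := by linarith
        have := (le_div_iff₀ h0).1 (le_trans hur hslope)
        linarith
      show g z ≤ g y
      simp only [hgdef]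
      nlinarith [hgz]
    · exact Set.mem_setOf.2 (le_refl _)
    · -- y < z : use fp
      have hyIco : y ∈ Set.Ico a b := ⟨hy.1, lt_of_lt_of_le hyz hz.2⟩
      obtain ⟨r, hr, hlim⟩ := hfp y hyIco
      rw [hr] at h1
      have hru : r ≤ u := by exact_mod_cast h1
      have hslope : (f z - f y) / (z - y) ≤ r := by
        refine ge_of_tendsto hlim ?_
        filter_upwards [Ioo_mem_nhdsGT_of_mem
          (Set.left_mem_Ico.2 (by linarith : (0:ℝ) < z - y))] with h hh
        have key := (hconc.neg).secant_mono_aux2 (x := y) (y := y + h) (z := z)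
          hy hz (by linarith [hh.1]) (by linarith [hh.2])
        simp only [Pi.neg_apply] at key
        have e : y + h - y = h := by ring
        rw [e] at key
        rw [show -f (y + h) - -f y = -(f (y + h) - f y) by ring,
          show -f z - -f y = -(f z - f y) by ring,
          neg_div, neg_div, neg_le_neg_iff] at key
        exact key
      have hgz : f z - f y ≤ u * (z - y) := by
        have h0 : 0 < z - y := by linarith
        have := (div_le_iff₀ h0).1 (le_trans hslope hru)
        linarith
      show g z ≤ g y
      simp only [hgdef]
      nlinarith [hgz]
  -- existence of a maximum
  obtain ⟨y0, hy0, hy0max⟩ := isCompact_Icc.exists_isMaxOn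
    (Set.nonempty_Icc.2 hab.le) hgcont
  by_cases hsing : ∀ z ∈ Set.Icc a b, IsMaxOn g (Set.Icc a b) z → z = y0
  · -- unique maximum : case (i)
    left
    constructor
    · refine ⟨y0, ⟨hy0, memS y0 hy0 hy0max⟩, ?_⟩
      rintro y' ⟨hy'mem, h1, h2⟩
      exact hsing y' hy'mem (maxS y' hy'mem h1 h2)
    · rintro ⟨c, d, hcd, hsub, hder⟩
      have hp : (3*c + d)/4 ∈ Set.Ioo c d := ⟨by linarith, by linarith⟩
      have hq : (c + 3*d)/4 ∈ Set.Ioo c d := ⟨by linarith, by linarith⟩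
      have hpe := hder _ hp
      have hqe := hder _ hq
      have hpm := hsing _ (hsub hp) (maxS _ (hsub hp) hpe.1.le hpe.2.ge)
      have hqm := hsing _ (hsub hq) (maxS _ (hsub hq) hqe.1.le hqe.2.ge)
      have : (3*c + d)/4 ≠ (c + 3*d)/4 := by intro h; nlinarith
      exact this (hpm.trans hqm.symm)
  · -- at least two maxima : case (ii)
    push_neg at hsing
    obtain ⟨z, hzmem, hzmax, hzne⟩ := hsing
    set y1 := min z y0 with hy1def
    set y2 := max z y0 with hy2def
    have h12 : y1 < y2 := by
      rcases hzne.lt_or_gt with h | h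
      · simp [hy1def, hy2def, min_eq_left h.le, max_eq_right h.le, h]
      · simp [hy1def, hy2def, min_eq_right h.le, max_eq_left h.le, h]
    have hy1mem : y1 ∈ Set.Icc a b := by
      rcases min_cases z y0 with ⟨h, _⟩ | ⟨h, _⟩ <;> rw [hy1def, h] <;> assumption
    have hy2mem : y2 ∈ Set.Icc a b := by
      rcases max_cases z y0 with ⟨h, _⟩ | ⟨h, _⟩ <;> rw [hy2def, h] <;> assumption
    have hy1max : IsMaxOn g (Set.Icc a b) y1 := by
      rcases min_cases z y0 with ⟨h, _⟩ | ⟨h, _⟩ <;> rw [hy1def, h] <;> assumption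
    have hy2max : IsMaxOn g (Set.Icc a b) y2 := by
      rcases max_cases z y0 with ⟨h, _⟩ | ⟨h, _⟩ <;> rw [hy2def, h] <;> assumption
    have heq : g y2 = g y1 := le_antisymm (hy1max hy2mem) (hy2max hy1mem)
    -- g is constant on [y1, y2]
    have hconst : ∀ t ∈ Set.Icc y1 y2, g t = g y1 := by
      intro t ht
      have htab : t ∈ Set.Icc a b := ⟨le_trans hy1mem.1 ht.1, le_trans ht.2 hy2mem.2⟩
      refine le_antisymm (hy1max htab) ?_
      rcases eq_or_lt_of_le ht.1 with rfl | hlt1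
      · exact le_rfl
      rcases eq_or_lt_of_le ht.2 with rfl | hlt2
      · exact heq.ge
      set θ : ℝ := (y2 - t) / (y2 - y1) with hθdef
      have h0 : 0 < y2 - y1 := by linarith
      have hθ0 : 0 ≤ θ := div_nonneg (by linarith) h0.le
      have hθ1 : 0 ≤ 1 - θ := by
        rw [hθdef, sub_nonneg, div_le_one h0]; linarith
      have hsum : θ + (1 - θ) = 1 := by ring
      have hcomb := hconc.2 hy1mem hy2mem hθ0 hθ1 hsum
      simp only [smul_eq_mul] at hcomb
      have et : θ * y1 + (1 - θ) * y2 = t := by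
        field_simp [hθdef]
        have hθm : θ * (y2 - y1) = y2 - t := by rw [hθdef]; exact div_mul_cancel₀ _ h0.ne'
        linear_combination (-1 : ℝ) * hθm
      rw [et] at hcomb
      have heq' : f y2 - u * y2 = f y1 - u * y1 := by
        have := heq; simp only [hgdef] at this; linarith
      have e2 : u * t = θ * (u * y1) + (1 - θ) * (u * y2) := by
        rw [← et]; ring
      have key : θ * f y1 + (1 - θ) * f y2 - u * t = f y1 - u * y1 := by
        linear_combination (1 - θ) * heq' - e2
      simp only [hgdef]
      linarith [hcomb, key]
    right
    constructor
    · refine ⟨y1, y2, h12, fun t ht => ⟨le_trans hy1mem.1 ht.1.le, le_trans ht.2.le hy2mem.2⟩, ?_⟩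
      intro y hy
      have hyIcc : y ∈ Set.Icc y1 y2 := ⟨hy.1.le, hy.2.le⟩
      have hyab : y ∈ Set.Icc a b := ⟨le_trans hy1mem.1 hy.1.le, le_trans hy.2.le hy2mem.2⟩
      constructor
      · obtain ⟨r, hr, hlim⟩ := hfp y ⟨hyab.1, lt_of_lt_of_le hy.2 hy2mem.2⟩
        have hlimu : Tendsto (fun h : ℝ => (f (y + h) - f y) / h)
            (nhdsWithin 0 (Set.Ioi 0)) (nhds u) := by
          refine Tendsto.congr' ?_ tendsto_const_nhds
          filter_upwards [Ioo_mem_nhdsGT_of_mem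
            (Set.left_mem_Ico.2 (by linarith [hy.2] : (0:ℝ) < y2 - y))] with h hh
          have hm : y + h ∈ Set.Icc y1 y2 := ⟨by linarith [hy.1, hh.1.le], by linarith [hh.2]⟩
          have c1 := hconst _ hm
          have c2 := hconst _ hyIcc
          simp only [hgdef] at c1 c2
          have hne : h ≠ 0 := ne_of_gt hh.1
          show u = (f (y + h) - f y) / h
          rw [eq_div_iff hne]
          linear_combination c2 - c1
        rw [hr, tendsto_nhds_unique hlim hlimu]
      · obtain ⟨r, hr, hlim⟩ := hfm y ⟨lt_of_le_of_lt hy1mem.1 hy.1, hyab.2⟩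
        have hlimu : Tendsto (fun h : ℝ => (f y - f (y - h)) / h)
            (nhdsWithin 0 (Set.Ioi 0)) (nhds u) := by
          refine Tendsto.congr' ?_ tendsto_const_nhds
          filter_upwards [Ioo_mem_nhdsGT_of_mem
            (Set.left_mem_Ico.2 (by linarith [hy.1] : (0:ℝ) < y - y1))] with h hh
          have hm : y - h ∈ Set.Icc y1 y2 := ⟨by linarith [hh.2], by linarith [hy.2, hh.1.le]⟩
          have c1 := hconst _ hm
          have c2 := hconst _ hyIcc
          simp only [hgdef] at c1 c2
          have hne : h ≠ 0 := ne_of_gt hh.1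
          show u = (f y - f (y - h)) / h
          rw [eq_div_iff hne]
          linear_combination c1 - c2
        rw [hr, tendsto_nhds_unique hlim hlimu]
    · rintro ⟨ys, ⟨hysmem, h1, h2⟩, huniq⟩
      have e1 := huniq y1 ⟨hy1mem, memS y1 hy1mem hy1max⟩
      have e2 := huniq y2 ⟨hy2mem, memS y2 hy2mem hy2max⟩
      exact absurd (e1.trans e2.symm) h12.ne
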